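/- arXiv:1110.5117 — 2 statements merged into one kernel-verified Lean document; each statement's English description precedes it below -/
import Mathlib

section
/- Let A → B be a faithfully flat ring map and F a complex of A-modules in D(A). If F ⊗^L_A B has Tor-amplitude in [a,b] as a complex of B-modules, then F has Tor-amplitude in [a,b] as a complex of A-modules. -/
open CategoryTheory Limits MonoidalCategory HomologicalComplex

section Defs

variable (R : Type) [CommRing R]

/-- Degreewise tensor of a cochain complex with a module. -/
noncomputable def tensorComplex (F : CochainComplex (ModuleCat.{0} R) ℤ) (K : ModuleCat.{0} R) :
    CochainComplex (ModuleCat.{0} R) ℤ :=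
  ((tensorRight K).mapHomologicalComplex _).obj F

/-- The complex vanishes in all sufficiently large degrees. -/
def IsBoundedAbove (F : CochainComplex (ModuleCat.{0} R) ℤ) : Prop :=
  ∃ N : ℤ, ∀ i > N, IsZero (F.X i)

/-- The complex vanishes outside a bounded range of degrees. -/
def IsBoundedC (F : CochainComplex (ModuleCat.{0} R) ℤ) : Prop :=
  ∃ m N : ℤ, ∀ i : ℤ, (i < m ∨ N < i) → IsZero (F.X i)

def DegreewiseFGFree (F : CochainComplex (ModuleCat.{0} R) ℤ) : Prop :=
  ∀ i : ℤ, Module.Finite R (F.X i) ∧ Module.Free R (F.X i)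

def DegreewiseFGProj (F : CochainComplex (ModuleCat.{0} R) ℤ) : Prop :=
  ∀ i : ℤ, Module.Finite R (F.X i) ∧ Module.Projective R (F.X i)

/-- A strictly perfect complex: bounded and degreewise finitely generated projective. -/
def IsPerfectData (F : CochainComplex (ModuleCat.{0} R) ℤ) : Prop :=
  IsBoundedC R F ∧ DegreewiseFGProj R F

/-- Tor-amplitude in `[a,b]` for a complex of projective (hence flat) modules, where the
underived degreewise tensor computes the derived tensor: for every module `K`, the homology
of `F ⊗ K` is concentrated in degrees `[a,b]`. -/
def TorAmpPlain (F : CochainComplex (ModuleCat.{0} R) ℤ) (a b : ℤ) : Prop :=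
  ∀ (K : ModuleCat.{0} R) (i : ℤ), (i < a ∨ b < i) → IsZero ((tensorComplex R F K).homology i)

/-- Tor-amplitude in `[a,b]` for an arbitrary complex, tested on every bounded-above
degreewise-projective resolution (such a resolution computes the derived tensor product). -/
def TorAmp (F : CochainComplex (ModuleCat.{0} R) ℤ) (a b : ℤ) : Prop :=
  ∀ (P : CochainComplex (ModuleCat.{0} R) ℤ) (f : P ⟶ F),
    IsBoundedAbove R P → (∀ i : ℤ, Module.Projective R (P.X i)) → QuasiIso f →
      TorAmpPlain R P a b

/-- A complex is pseudo-coherent if it admits a quasi-isomorphism from a bounded-above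
complex of finitely generated free modules. -/
def PseudoCoherent (F : CochainComplex (ModuleCat.{0} R) ℤ) : Prop :=
  ∃ (P : CochainComplex (ModuleCat.{0} R) ℤ) (f : P ⟶ F),
    IsBoundedAbove R P ∧ DegreewiseFGFree R P ∧ QuasiIso f

/-- A complex is `n`-pseudo-coherent if it admits a map from a bounded complex of finitely
generated free modules which is an isomorphism on cohomology in degrees `> n` and a
surjection in degree `n`. -/
def NPseudoCoherent (n : ℤ) (F : CochainComplex (ModuleCat.{0} R) ℤ) : Prop :=
  ∃ (P : CochainComplex (ModuleCat.{0} R) ℤ) (f : P ⟶ F),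
    IsBoundedC R P ∧ DegreewiseFGFree R P ∧
      (∀ i > n, IsIso (homologyMap f i)) ∧ Epi (homologyMap f n)

end Defs



section Aux
open TensorProduct
variable (A B : Type) [CommRing A] [CommRing B] [Algebra A B] (K M : ModuleCat.{0} A)

noncomputable def bEquiv :
    (((ModuleCat.restrictScalars (algebraMap A B)).obj (ModuleCat.of B B)) : Type) ≃ₗ[A] B :=
  { AddEquiv.refl B with
    map_smul' := fun a x => by
      show algebraMap A B a * (show B from x) = a • (show B from x)
      rw [Algebra.smul_def] }

noncomputable def bc :
    (((ModuleCat.extendScalars (algebraMap A B)).obj M ⊗ ModuleCat.of B (TensorProduct A B (K : Type))) : ModuleCat B) ≃+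
      TensorProduct A ((M ⊗ K : ModuleCat A) : Type) B :=
  letI : Module A ((ModuleCat.extendScalars (algebraMap A B)).obj M) := inferInstanceAs (Module A (TensorProduct A _ _))
  letI : IsScalarTower A B ((ModuleCat.extendScalars (algebraMap A B)).obj M) := ⟨fun a s x => by
    induction x using TensorProduct.induction_on with
    | zero =>
      show (a • s) • (0 : (ModuleCat.extendScalars (algebraMap A B)).obj M) = a • s • (0 : (ModuleCat.extendScalars (algebraMap A B)).obj M)
      simp
    | tmul b m =>
      have h : ((a • s) • b : (((ModuleCat.restrictScalars (algebraMap A B)).obj (ModuleCat.of B B)) : Type))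
          = a • (s • b) := by
        show ((a • s) * (show B from b) : B) = algebraMap A B a * (s * (show B from b))
        rw [Algebra.smul_def, mul_assoc]
      exact congrArg (· ⊗ₜ[A] m) h
    | add x y hx hy =>
      show (a • s) • ((show (ModuleCat.extendScalars (algebraMap A B)).obj M from x) + (show (ModuleCat.extendScalars (algebraMap A B)).obj M from y)) = a • s • ((show (ModuleCat.extendScalars (algebraMap A B)).obj M from x) + (show (ModuleCat.extendScalars (algebraMap A B)).obj M from y))
      rw [smul_add, smul_add, smul_add]
      exact congrArg₂ (· + ·) hx hy⟩
  (((TensorProduct.AlgebraTensorModule.cancelBaseChange A B B ((ModuleCat.extendScalars (algebraMap A B)).obj M) K).toAddEquiv.trans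
    (TensorProduct.assoc A _ (M : Type) (K : Type)).toAddEquiv).trans
    (TensorProduct.comm A _ _).toAddEquiv).trans
    (TensorProduct.congr (LinearEquiv.refl A ((M ⊗ K : ModuleCat A) : Type)) (bEquiv A B)).toAddEquiv

variable {M} in
theorem bc_tmul (b b' : B) (m : M) (k : K) :
    bc A B K M ((b ⊗ₜ[A] m) ⊗ₜ[B] (b' ⊗ₜ[A] k)) = (m ⊗ₜ[A] k) ⊗ₜ[A] (b' * b) := by
  simp [bc, bEquiv, ModuleCat.ExtendScalars.smul_tmul]
  rfl

theorem bc_natural {M N : ModuleCat.{0} A} (l : M ⟶ N)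
    (x : (((ModuleCat.extendScalars (algebraMap A B)).obj M ⊗ ModuleCat.of B (TensorProduct A B (K : Type))) : ModuleCat B)) :
    bc A B K N (((ModuleCat.extendScalars (algebraMap A B)).map l ▷ ModuleCat.of B (TensorProduct A B (K : Type))) x)
      = LinearMap.rTensor B (l ▷ K).hom (bc A B K M x) := by
  induction x using TensorProduct.induction_on with
  | zero => simp
  | add x y hx hy => rw [map_add, map_add, map_add, hx, hy, map_add]
  | tmul x y =>
    induction x using TensorProduct.induction_on with
    | zero => erw [TensorProduct.zero_tmul]; simp
    | add x x' hx hx' =>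
      erw [TensorProduct.add_tmul]
      rw [map_add, map_add, map_add, hx, hx', map_add]
    | tmul b m =>
      induction y using TensorProduct.induction_on with
      | zero => erw [TensorProduct.tmul_zero]; simp
      | add y y' hy hy' => erw [TensorProduct.tmul_add]; rw [map_add, map_add, map_add, hy, hy', map_add]
      | tmul b' k =>
        erw [ModuleCat.MonoidalCategory.whiskerRight_apply]
        erw [ModuleCat.ExtendScalars.map_tmul]
        erw [bc_tmul]

end Aux

/-- Let `A → B` be faithfully flat and `F` a complex of `A`-modules.  If the derived base
change `F ⊗^L_A B` (computed on any bounded-above projective resolution `P → F` by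
degreewise base change) has Tor-amplitude in `[a,b]` over `B`, then `F` has Tor-amplitude
in `[a,b]` over `A`. -/
theorem torAmp_descends_faithfullyFlat (A : Type) [CommRing A] (B : Type) [CommRing B]
    [Algebra A B] [Module.FaithfullyFlat A B]
    (F : CochainComplex (ModuleCat.{0} A) ℤ) (a b : ℤ)
    (h : ∀ (P : CochainComplex (ModuleCat.{0} A) ℤ) (f : P ⟶ F),
      IsBoundedAbove A P → (∀ i : ℤ, Module.Projective A (P.X i)) → QuasiIso f →
        TorAmpPlain B
          (((ModuleCat.extendScalars (algebraMap A B)).mapHomologicalComplex _).obj P) a b) :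
    TorAmp A F a b := by
  intro P f hbd hproj hqi K i hi
  have hB := h P f hbd hproj hqi
  rw [← HomologicalComplex.exactAt_iff_isZero_homology]
  rw [HomologicalComplex.exactAt_iff' _ (i-1) i (i+1) (by simp) (by simp)]
  rw [ShortComplex.ShortExact.moduleCat_exact_iff_function_exact]
  apply Module.FaithfullyFlat.rTensor_reflects_exact A B
  have hD := hB (ModuleCat.of B (TensorProduct A B (K : Type))) i hi
  rw [← HomologicalComplex.exactAt_iff_isZero_homology] at hD
  rw [HomologicalComplex.exactAt_iff' _ (i-1) i (i+1) (by simp) (by simp)] at hD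
  rw [ShortComplex.ShortExact.moduleCat_exact_iff_function_exact] at hD
  dsimp [tensorComplex] at hD ⊢
  have := Function.Exact.of_ladder_addEquiv_of_exact
    (e₁ := bc A B K (P.X (i-1))) (e₂ := bc A B K (P.X i)) (e₃ := bc A B K (P.X (i+1)))
    (f₁₂ := (((ModuleCat.extendScalars (algebraMap A B)).map (P.d (i-1) i) ▷
      ModuleCat.of B (TensorProduct A B (K : Type))).hom).toAddMonoidHom)
    (f₂₃ := (((ModuleCat.extendScalars (algebraMap A B)).map (P.d i (i+1)) ▷
      ModuleCat.of B (TensorProduct A B (K : Type))).hom).toAddMonoidHom)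
    (g₁₂ := (LinearMap.rTensor B (P.d (i-1) i ▷ K).hom).toAddMonoidHom)
    (g₂₃ := (LinearMap.rTensor B (P.d i (i+1) ▷ K).hom).toAddMonoidHom)
    (AddMonoidHom.ext fun x => (bc_natural A B K (P.d (i-1) i) x).symm)
    (AddMonoidHom.ext fun x => (bc_natural A B K (P.d i (i+1)) x).symm)
    hD
  exact this
end

section
/- Let A be a commutative ring and M a perfect complex over A. For each integer i, the function on Spec A sending a prime p to the k(p)-dimension of H^i(M ⊗^L_A k(p)) is upper semi-continuous in the Zariski topology. -/
open CategoryTheory Limits MonoidalCategory HomologicalComplex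

/-- The residue field of `A` at a prime `p`. -/
noncomputable abbrev kappa (A : Type) [CommRing A] (p : PrimeSpectrum A) : Type :=
  IsLocalRing.ResidueField (Localization.AtPrime p.asIdeal)

/-- The derived fiber `M ⊗^L_A k(p)` of a perfect complex, computed degreewise. -/
noncomputable def fiberComplex (A : Type) [CommRing A] (p : PrimeSpectrum A)
    (M : CochainComplex (ModuleCat.{0} A) ℤ) : CochainComplex (ModuleCat.{0} (kappa A p)) ℤ :=
  ((ModuleCat.extendScalars (algebraMap A (kappa A p))).mapHomologicalComplex _).obj M


section AuxField
open Matrix Module Set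


variable {K : Type} [Field K]

theorem myRank_submatrix_le {m n m' n' : Type} [Fintype m] [Fintype n] [Fintype m'] [Fintype n']
    [DecidableEq m] [DecidableEq n] (N : Matrix m n K) (f : m' → m) (g : n' → n) :
    (N.submatrix f g).rank ≤ N.rank := by
  have h1 : N.submatrix f g =
      ((1 : Matrix m m K).submatrix f id) * N * ((1 : Matrix n n K).submatrix id g) := by
    ext i j
    simp [Matrix.mul_apply, Matrix.one_apply, Finset.sum_ite_eq, Finset.sum_ite_eq',
      ite_mul, mul_ite, mul_zero, zero_mul, mul_one]
  rw [h1]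
  exact le_trans (Matrix.rank_mul_le_left _ _) (Matrix.rank_mul_le_right _ _)

theorem exists_li_cols {m n : Type} [Fintype m] [Fintype n] (N : Matrix m n K) (r : ℕ)
    (h : r ≤ N.rank) : ∃ g : Fin r → n, LinearIndependent K (fun j => Nᵀ (g j)) := by
  classical
  have hs : (Set.range Nᵀ).Finite := Set.finite_range _
  obtain ⟨b, hbsub, hspan, hli⟩ := exists_linearIndependent K (Set.range Nᵀ)
  have hbfin : b.Finite := hs.subset hbsub
  haveI : Fintype b := hbfin.fintype
  have hcard : finrank K (Submodule.span K b) = b.toFinset.card := by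
    rw [finrank_span_set_eq_card (s := b) hli, Set.toFinset_card]
  have hr : r ≤ b.toFinset.card := by
    rw [← hcard, hspan]
    rw [Matrix.rank_eq_finrank_span_cols] at h
    exact h
  obtain ⟨t, hts, htc⟩ := Finset.exists_subset_card_eq hr
  let e : Fin r → b := fun j => ⟨((t.equivFinOfCardEq htc).symm j : (m → K)), by
    have := ((t.equivFinOfCardEq htc).symm j).2
    have := hts this
    simpa using this⟩
  have he : Function.Injective e := by
    intro a a' haa'
    have : ((t.equivFinOfCardEq htc).symm a : (m → K)) =
        ((t.equivFinOfCardEq htc).symm a' : (m → K)) := by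
      simpa [e] using congrArg Subtype.val haa'
    exact (t.equivFinOfCardEq htc).symm.injective (Subtype.ext this)
  have hli' : LinearIndependent K (fun j => ((e j : (m → K)))) := hli.comp e he
  have : ∀ j, ∃ c : n, Nᵀ c = (e j : (m → K)) := fun j => hbsub (e j).2
  choose g hg using this
  exact ⟨g, by simpa [hg] using hli'⟩

theorem rank_le_iff_minors {m n : Type} [Fintype m] [Fintype n] [DecidableEq m] [DecidableEq n]
    (N : Matrix m n K) (r : ℕ) :
    N.rank ≤ r ↔ ∀ (f : Fin (r + 1) → m) (g : Fin (r + 1) → n), (N.submatrix f g).det = 0 := by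
  constructor
  · intro h f g
    by_contra hd
    have hu : IsUnit (N.submatrix f g) := by
      rw [Matrix.isUnit_iff_isUnit_det]
      exact isUnit_iff_ne_zero.2 hd
    have := Matrix.rank_of_isUnit _ hu
    have hle := myRank_submatrix_le N f g
    rw [this, Fintype.card_fin] at hle
    omega
  · intro h
    by_contra hlt
    push_neg at hlt
    have hr1 : r + 1 ≤ N.rank := hlt
    obtain ⟨g, hg⟩ := exists_li_cols N (r + 1) hr1
    set B : Matrix m (Fin (r + 1)) K := N.submatrix id g with hB
    have hBcols : LinearIndependent K (fun j => Bᵀ j) := by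
      convert hg using 1
      rfl
    have hBrank : B.rank = r + 1 := by
      rw [Matrix.rank_eq_finrank_span_cols]
      have := finrank_span_eq_card hBcols
      simp only [Fintype.card_fin] at this
      exact this
    have hBt : Bᵀ.rank = r + 1 := by rw [Matrix.rank_transpose]; exact hBrank
    obtain ⟨f, hf⟩ := exists_li_cols Bᵀ (r + 1) (le_of_eq hBt.symm)
    have hrows : LinearIndependent K (fun i => B (f i)) := by
      simpa using hf
    have hrows' : LinearIndependent K (fun i => (N.submatrix f g) i) := hrows
    have hu : IsUnit (N.submatrix f g) := Matrix.linearIndependent_rows_iff_isUnit.1 hrows'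
    exact absurd (h f g) (isUnit_iff_ne_zero.1 ((Matrix.isUnit_iff_isUnit_det _).1 hu))

theorem idem_rank {V : Type} [AddCommGroup V] [Module K V] [FiniteDimensional K V]
    (q : V →ₗ[K] V) (hq : q ∘ₗ q = q) :
    finrank K (LinearMap.range q) + finrank K (LinearMap.range (LinearMap.id - q)) =
      finrank K V := by
  have hker : LinearMap.range (LinearMap.id - q) = LinearMap.ker q := by
    apply le_antisymm
    · rintro x ⟨y, rfl⟩
      simp only [LinearMap.mem_ker, LinearMap.sub_apply, LinearMap.id_apply, map_sub]
      have : q (q y) = q y := congrFun (congrArg DFunLike.coe hq) y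
      simp [this]
    · intro x hx
      exact ⟨x, by simp [LinearMap.mem_ker.1 hx]⟩
  rw [hker]
  exact LinearMap.finrank_range_add_finrank_ker q

end AuxField

section AuxChi
open CategoryTheory Matrix Module Set


variable {A K : Type} [CommRing A] [CommRing K] (ψ : A →+* K)

noncomputable abbrev KofA : ModuleCat A := ((ModuleCat.restrictScalars ψ).obj (ModuleCat.of K K))
noncomputable def toK (s : KofA ψ) : K := s
noncomputable def ofK (s : K) : KofA ψ := s

@[simp] lemma toK_ofK (s : K) : toK ψ (ofK ψ s) = s := rfl
@[simp] lemma ofK_toK (s : KofA ψ) : ofK ψ (toK ψ s) = s := rfl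

lemma ext_smul_tmul (m : ℕ) (c : K) (s : KofA ψ) (x : Fin m → A) :
    c • (show ((ModuleCat.extendScalars ψ).obj (ModuleCat.of A (Fin m → A))) from s ⊗ₜ[A] x)
      = ((ofK ψ (c * toK ψ s)) ⊗ₜ[A] x) := by
  rfl

lemma tmul_move (m : ℕ) (a : A) (s : KofA ψ) (x : Fin m → A) :
    (show ((ModuleCat.extendScalars ψ).obj (ModuleCat.of A (Fin m → A))) from s ⊗ₜ[A] (a • x))
      = ((ofK ψ (ψ a * toK ψ s)) ⊗ₜ[A] x) := by
  rw [← TensorProduct.smul_tmul]; rfl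

lemma ext_map_tmul {X Y : ModuleCat.{0} A} (l : X ⟶ Y) (s : KofA ψ) (x : X) :
    (ModuleCat.extendScalars ψ).map l (show
      ((ModuleCat.extendScalars ψ).obj X) from s ⊗ₜ[A] x) = (s ⊗ₜ[A] (l x)) := rfl

noncomputable def chi (m : ℕ) :
    (Fin m → K) →ₗ[K] ((ModuleCat.extendScalars ψ).obj (ModuleCat.of A (Fin m → A))) where
  toFun v := ∑ j : Fin m, ((ofK ψ (v j)) ⊗ₜ[A] (Pi.single j (1 : A) : Fin m → A))
  map_add' v w := by
    show (∑ j : Fin m, @id ((ModuleCat.extendScalars ψ).obj (ModuleCat.of A (Fin m → A))) ((ofK ψ ((v + w) j)) ⊗ₜ[A] (Pi.single j (1 : A) : Fin m → A)))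
      = (∑ j : Fin m, @id ((ModuleCat.extendScalars ψ).obj (ModuleCat.of A (Fin m → A))) ((ofK ψ (v j)) ⊗ₜ[A] (Pi.single j (1 : A) : Fin m → A)))
        + ∑ j : Fin m, @id ((ModuleCat.extendScalars ψ).obj (ModuleCat.of A (Fin m → A))) ((ofK ψ (w j)) ⊗ₜ[A] (Pi.single j (1 : A) : Fin m → A))
    rw [← Finset.sum_add_distrib]
    refine Finset.sum_congr rfl fun j _ => ?_
    rw [Pi.add_apply]
    exact TensorProduct.add_tmul _ _ _
  map_smul' c v := by
    rw [RingHom.id_apply]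
    show (∑ j : Fin m, @id ((ModuleCat.extendScalars ψ).obj (ModuleCat.of A (Fin m → A))) ((ofK ψ ((c • v) j)) ⊗ₜ[A] (Pi.single j (1 : A) : Fin m → A)))
      = c • ∑ j : Fin m, @id ((ModuleCat.extendScalars ψ).obj (ModuleCat.of A (Fin m → A))) ((ofK ψ (v j)) ⊗ₜ[A] (Pi.single j (1 : A) : Fin m → A))
    rw [Finset.smul_sum]
    exact Finset.sum_congr rfl fun j _ => (ext_smul_tmul ψ m c (ofK ψ (v j)) _).symm

lemma chi_apply (m : ℕ) (v : Fin m → K) :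
    chi ψ m v = ∑ j : Fin m, ((ofK ψ (v j)) ⊗ₜ[A] (Pi.single j (1 : A) : Fin m → A)) := rfl

lemma chi_surjective (m : ℕ) : Function.Surjective (chi ψ m) := by
  intro z
  induction z using TensorProduct.induction_on with
  | zero =>
    refine ⟨0, ?_⟩
    rw [chi_apply]
    refine Finset.sum_eq_zero fun j _ => ?_
    have h0 : (ofK ψ ((0 : Fin m → K) j)) = (0 : KofA ψ) := rfl
    rw [h0]
    exact TensorProduct.zero_tmul _ _
  | tmul s w =>
    refine ⟨fun j => ψ (w j) * toK ψ s, ?_⟩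
    rw [chi_apply]
    have h1 : ∀ j : Fin m, ((ofK ψ (ψ (w j) * toK ψ s)) ⊗ₜ[A] (Pi.single j (1 : A) : Fin m → A))
        = (s ⊗ₜ[A] (Pi.single j (w j) : Fin m → A)) := by
      intro j
      rw [← tmul_move]
      congr 1
      rw [← Pi.single_smul, smul_eq_mul, mul_one]
    rw [Finset.sum_congr rfl (fun j _ => h1 j), ← TensorProduct.tmul_sum]
    congr 1
    exact Finset.univ_sum_single w
  | add x y hx hy =>
    obtain ⟨v, rfl⟩ := hx
    obtain ⟨w, rfl⟩ := hy
    exact ⟨v + w, map_add _ _ _⟩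

noncomputable def theta (m : ℕ) :
    TensorProduct A (KofA ψ) (Fin m → A) →ₗ[A]
      ((ModuleCat.restrictScalars ψ).obj (ModuleCat.of K (Fin m → K))) :=
  TensorProduct.lift <| LinearMap.mk₂ A
    (fun (s : KofA ψ) (w : Fin m → A) =>
      (show ((ModuleCat.restrictScalars ψ).obj (ModuleCat.of K (Fin m → K))) from
        fun j => toK ψ s * ψ (w j)))
    (fun s s' w => by
      funext j
      exact (add_mul (toK ψ s) (toK ψ s') (ψ (w j)) : _))
    (fun a s w => by funext j; exact mul_assoc _ _ _)
    (fun s w w' => by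
      funext j
      show toK ψ s * ψ (w j + w' j) = toK ψ s * ψ (w j) + toK ψ s * ψ (w' j)
      rw [map_add, mul_add])
    (fun a s w => by
      funext j
      show toK ψ s * ψ (a * w j) = ψ a * (toK ψ s * ψ (w j))
      rw [_root_.map_mul]; ring)

lemma theta_tmul (m : ℕ) (s : KofA ψ) (w : Fin m → A) :
    theta ψ m (s ⊗ₜ[A] w) = fun j => toK ψ s * ψ (w j) := rfl

lemma theta_chi (m : ℕ) (v : Fin m → K) : theta ψ m (chi ψ m v) = v := by
  funext j'
  rw [chi_apply]; erw [map_sum]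
  have h1 : ∀ j : Fin m, theta ψ m (((ofK ψ (v j)) ⊗ₜ[A] (Pi.single j (1 : A) : Fin m → A)))
      = fun j'' => v j * ψ ((Pi.single j (1:A) : Fin m → A) j'') := fun j => rfl
  rw [Finset.sum_congr rfl (fun j _ => h1 j)]
  show (∑ j : Fin m, fun j'' => v j * ψ ((Pi.single j (1:A) : Fin m → A) j'')) j' = v j'
  rw [Finset.sum_apply]
  simp [Pi.single_apply]

lemma chi_injective (m : ℕ) : Function.Injective (chi ψ m) := by
  intro v w h
  have := congrArg (theta ψ m) h
  rwa [theta_chi, theta_chi] at this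

noncomputable def chiEquiv (m : ℕ) :
    (Fin m → K) ≃ₗ[K] ((ModuleCat.extendScalars ψ).obj (ModuleCat.of A (Fin m → A))) :=
  LinearEquiv.ofBijective (chi ψ m) ⟨chi_injective ψ m, chi_surjective ψ m⟩

/-- The key commuting square. -/
lemma map_chi_comm (m m' : ℕ) (l : ModuleCat.of A (Fin m → A) ⟶ ModuleCat.of A (Fin m' → A)) :
    ∀ v : Fin m → K,
      (ModuleCat.extendScalars ψ).map l (chi ψ m v)
        = chi ψ m' (((LinearMap.toMatrix' l.hom).map ψ).mulVecLin v) := by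
  intro v
  rw [chi_apply]; erw [map_sum]
  have h1 : ∀ j : Fin m,
      (ModuleCat.extendScalars ψ).map l ((ofK ψ (v j)) ⊗ₜ[A] (Pi.single j (1 : A) : Fin m → A))
        = ((ofK ψ (v j)) ⊗ₜ[A] (l (Pi.single j (1 : A)) : Fin m' → A)) :=
    fun j => ext_map_tmul ψ l _ _
  rw [Finset.sum_congr rfl (fun j _ => h1 j)]
  -- expand l (e_j) in the standard basis
  have h2 : ∀ j : Fin m,
      ((ofK ψ (v j)) ⊗ₜ[A] (l (Pi.single j (1 : A)) : Fin m' → A))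
        = ∑ j' : Fin m', ((ofK ψ (ψ ((l (Pi.single j (1:A))) j') * v j))
            ⊗ₜ[A] (Pi.single j' (1 : A) : Fin m' → A)) := by
    intro j
    have hexp : (l (Pi.single j (1 : A)) : Fin m' → A)
        = ∑ j' : Fin m', ((l (Pi.single j (1:A))) j') • (Pi.single j' (1 : A) : Fin m' → A) := by
      rw [Finset.sum_congr rfl (fun j' _ => by rw [← Pi.single_smul, smul_eq_mul, mul_one])]
      exact (Finset.univ_sum_single _).symm
    calc (ofK ψ (v j)) ⊗ₜ[A] (l (Pi.single j (1 : A)) : Fin m' → A)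
        = ∑ j' : Fin m', ((ofK ψ (v j)) ⊗ₜ[A]
            (((l (Pi.single j (1:A))) j') • (Pi.single j' (1 : A) : Fin m' → A))) := by
          conv_lhs => rw [hexp]
          exact TensorProduct.tmul_sum _ _ _
      _ = _ := Finset.sum_congr rfl fun j' _ => by
          exact tmul_move ψ m' _ _ _
  erw [Finset.sum_congr rfl (fun j _ => h2 j)]
  rw [chi_apply, Finset.sum_comm]
  refine Finset.sum_congr rfl fun j' _ => ?_
  have hcoef : ofK ψ ((((LinearMap.toMatrix'
        l.hom).map ψ).mulVecLin v) j')
      = ofK ψ (∑ j : Fin m, ψ ((l (Pi.single j (1:A))) j') * v j) := by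
    congr 1
  rw [hcoef, ← TensorProduct.sum_tmul]
  rfl

section Transfer
variable {A K : Type} [CommRing A] [Field K] (ψ : A →+* K)

lemma fr_comp_surj {U V W : Type} [AddCommGroup U] [AddCommGroup V] [AddCommGroup W]
    [Module K U] [Module K V] [Module K W] (g : V →ₗ[K] W) (h : U →ₗ[K] V)
    (hh : Function.Surjective h) :
    Module.finrank K (LinearMap.range (g ∘ₗ h)) = Module.finrank K (LinearMap.range g) := by
  rw [LinearMap.range_comp, LinearMap.range_eq_top.2 hh, Submodule.map_top]

lemma fr_comp_inj {U V W : Type} [AddCommGroup U] [AddCommGroup V] [AddCommGroup W]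
    [Module K U] [Module K V] [Module K W] (g : V →ₗ[K] W) (f : U →ₗ[K] V)
    (hg : Function.Injective g) :
    Module.finrank K (LinearMap.range (g ∘ₗ f)) = Module.finrank K (LinearMap.range f) := by
  rw [LinearMap.range_comp]
  exact ((Submodule.equivMapOfInjective g hg _).finrank_eq).symm

lemma finrank_range_map_eq (m m' : ℕ)
    (l : ModuleCat.of A (Fin m → A) ⟶ ModuleCat.of A (Fin m' → A)) :
    Module.finrank K (LinearMap.range ((ModuleCat.extendScalars ψ).map l).hom)
      = (((LinearMap.toMatrix' l.hom).map ψ)).rank := by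
  have hcomp : ((ModuleCat.extendScalars ψ).map l).hom ∘ₗ (chi ψ m)
      = (chi ψ m') ∘ₗ (((LinearMap.toMatrix' l.hom).map
          ψ).mulVecLin) :=
    LinearMap.ext (map_chi_comm ψ m m' l)
  have h1 : Module.finrank K (LinearMap.range ((ModuleCat.extendScalars ψ).map l).hom)
      = Module.finrank K (LinearMap.range (((ModuleCat.extendScalars ψ).map l).hom ∘ₗ (chi ψ m))) :=
    (fr_comp_surj _ _ (chi_surjective ψ m)).symm
  rw [h1, hcomp, fr_comp_inj _ _ (chi_injective ψ m')]
  rfl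

lemma fmap_split_surj_inj {X : ModuleCat.{0} A} {m : ℕ}
    (π : ModuleCat.of A (Fin m → A) ⟶ X) (s : X ⟶ ModuleCat.of A (Fin m → A))
    (hs : s ≫ π = 𝟙 X) :
    Function.Surjective ((ModuleCat.extendScalars ψ).map π) ∧
      Function.Injective ((ModuleCat.extendScalars ψ).map s) := by
  have h2 : (ModuleCat.extendScalars ψ).map s ≫ (ModuleCat.extendScalars ψ).map π
      = 𝟙 ((ModuleCat.extendScalars ψ).obj X) := by
    rw [← Functor.map_comp, hs]
    exact CategoryTheory.Functor.map_id _ _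
  constructor
  · intro y
    exact ⟨(ModuleCat.extendScalars ψ).map s y, ConcreteCategory.congr_hom h2 y⟩
  · intro x y hxy
    have hx := ConcreteCategory.congr_hom h2 x
    have hy := ConcreteCategory.congr_hom h2 y
    have := congrArg ((ModuleCat.extendScalars ψ).map π) hxy
    show x = y
    calc x = (ModuleCat.extendScalars ψ).map π ((ModuleCat.extendScalars ψ).map s x) := hx.symm
      _ = (ModuleCat.extendScalars ψ).map π ((ModuleCat.extendScalars ψ).map s y) := this
      _ = y := hy

lemma finite_fobj {X : ModuleCat.{0} A} {m : ℕ}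
    (π : ModuleCat.of A (Fin m → A) ⟶ X) (s : X ⟶ ModuleCat.of A (Fin m → A))
    (hs : s ≫ π = 𝟙 X) :
    Module.Finite K ((ModuleCat.extendScalars ψ).obj X) := by
  haveI : Module.Finite K ((ModuleCat.extendScalars ψ).obj (ModuleCat.of A (Fin m → A))) :=
    Module.Finite.equiv (chiEquiv ψ m)
  exact Module.Finite.of_surjective ((ModuleCat.extendScalars ψ).map π).hom
    (fmap_split_surj_inj ψ π s hs).1

end Transfer

end AuxChi

section AuxHom
open CategoryTheory Matrix Module Set



variable {k : Type} [Field k]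

open HomologicalComplex

lemma finrank_homology_eq (C : CochainComplex (ModuleCat.{0} k) ℤ) (i : ℤ)
    [FiniteDimensional k (C.X i)] :
    finrank k (C.homology i)
      + finrank k (LinearMap.range (C.d (i-1) i).hom)
      + finrank k (LinearMap.range (C.d i (i+1)).hom)
      = finrank k (C.X i) := by
  set S := C.sc' (i-1) i (i+1) with hS
  have e : C.homology i ≅ S.moduleCatLeftHomologyData.H :=
    (ShortComplex.homologyMapIso (C.isoSc' (i-1) i (i+1) (by simp) (by simp))) ≪≫
      S.moduleCatHomologyIso
  have h0 : finrank k (C.homology i) = finrank k S.moduleCatLeftHomologyData.H :=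
    e.toLinearEquiv.finrank_eq
  haveI : FiniteDimensional k S.X₂ := by
    show FiniteDimensional k (C.X i); infer_instance
  have hsub : (LinearMap.ker S.g.hom).subtype.comp S.moduleCatToCycles = S.f.hom := rfl
  have hq' : finrank k ((LinearMap.ker S.g.hom) ⧸ LinearMap.range S.moduleCatToCycles)
      + finrank k (LinearMap.range S.moduleCatToCycles) = finrank k (LinearMap.ker S.g.hom) :=
    Submodule.finrank_quotient_add_finrank _
  have hrannul : finrank k (LinearMap.range (C.d i (i+1)).hom)
      + finrank k (LinearMap.ker S.g.hom) = finrank k (C.X i) :=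
    LinearMap.finrank_range_add_finrank_ker S.g.hom
  have hrange2 : finrank k (LinearMap.range S.moduleCatToCycles)
      = finrank k (LinearMap.range (C.d (i-1) i).hom) := by
    have h1 : LinearMap.range (C.d (i-1) i).hom
        = LinearMap.range ((LinearMap.ker S.g.hom).subtype.comp S.moduleCatToCycles) :=
      congrArg LinearMap.range hsub.symm
    rw [h1, LinearMap.range_comp]
    exact (Submodule.equivMapOfInjective _ (Submodule.injective_subtype _) _).finrank_eq
  have hhom : finrank k S.moduleCatLeftHomologyData.H
      = finrank k ((LinearMap.ker S.g.hom) ⧸ LinearMap.range S.moduleCatToCycles) := rfl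
  rw [h0, hhom]
  omega


end AuxHom

lemma algebraMap_kappa_eq_zero_iff (A : Type) [CommRing A] (p : PrimeSpectrum A) (x : A) :
    algebraMap A (kappa A p) x = 0 ↔ x ∈ p.asIdeal := by
  rw [IsScalarTower.algebraMap_apply A (Localization.AtPrime p.asIdeal) (kappa A p)]
  rw [IsLocalRing.ResidueField.algebraMap_eq]
  rw [IsLocalRing.residue_eq_zero_iff]
  have h2 : Ideal.comap (algebraMap A (Localization.AtPrime p.asIdeal))
      (IsLocalRing.maximalIdeal (Localization.AtPrime p.asIdeal)) = p.asIdeal :=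
    IsLocalization.AtPrime.comap_maximalIdeal _ _
  constructor
  · intro h
    rw [← h2]
    exact h
  · intro h
    rw [← h2] at h
    exact h


section ZSet
open Matrix

/-- Closed locus where all `(r+1)`-minors of `N` lie in the prime. -/
def ZSet {A : Type} [CommRing A] {a b : ℕ} (N : Matrix (Fin a) (Fin b) A) (r : ℕ) :
    Set (PrimeSpectrum A) :=
  ⋂ (f : Fin (r+1) → Fin a) (g : Fin (r+1) → Fin b),
    PrimeSpectrum.zeroLocus {(N.submatrix f g).det}

lemma ZSet_closed {A : Type} [CommRing A] {a b : ℕ} (N : Matrix (Fin a) (Fin b) A) (r : ℕ) :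
    IsClosed (ZSet N r) :=
  isClosed_iInter fun _ => isClosed_iInter fun _ => PrimeSpectrum.isClosed_zeroLocus _

lemma mem_ZSet_iff {A : Type} [CommRing A] {a b : ℕ} (N : Matrix (Fin a) (Fin b) A) (r : ℕ)
    (p : PrimeSpectrum A) :
    p ∈ ZSet N r ↔ (N.map (algebraMap A (kappa A p))).rank ≤ r := by
  rw [rank_le_iff_minors]
  constructor
  · intro h f g
    have hmem := Set.mem_iInter.1 (Set.mem_iInter.1 h f) g
    rw [PrimeSpectrum.mem_zeroLocus, Set.singleton_subset_iff] at hmem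
    have h0 : algebraMap A (kappa A p) ((N.submatrix f g).det) = 0 :=
      (algebraMap_kappa_eq_zero_iff A p _).2 hmem
    rw [RingHom.map_det] at h0
    rw [Matrix.submatrix_map]
    exact h0
  · intro h
    refine Set.mem_iInter.2 fun f => Set.mem_iInter.2 fun g => ?_
    rw [PrimeSpectrum.mem_zeroLocus, Set.singleton_subset_iff]
    apply (algebraMap_kappa_eq_zero_iff A p _).1
    rw [RingHom.map_det, RingHom.mapMatrix_apply, ← Matrix.submatrix_map]
    exact h f g

end ZSet

/-- For a perfect complex `M` over a commutative ring `A` and each integer `i`, the function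
`p ↦ dim_{k(p)} H^i(M ⊗^L_A k(p))` is upper semi-continuous on `Spec A`: for each `n`, the
locus where the rank is at least `n` is Zariski closed. -/
theorem rank_upper_semicontinuous (A : Type) [CommRing A]
    (M : CochainComplex (ModuleCat.{0} A) ℤ) (hM : IsPerfectData A M) (i : ℤ) (n : ℕ) :
    IsClosed {p : PrimeSpectrum A |
      n ≤ Module.finrank (kappa A p) ((fiberComplex A p M).homology i)} := by
  classical
  obtain ⟨hBnd, hFG⟩ := hM
  haveI hf1 : Module.Finite A (M.X (i-1)) := (hFG (i-1)).1
  haveI hp1 : Module.Projective A (M.X (i-1)) := (hFG (i-1)).2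
  haveI hf2 : Module.Finite A (M.X i) := (hFG i).1
  haveI hp2 : Module.Projective A (M.X i) := (hFG i).2
  haveI hf3 : Module.Finite A (M.X (i+1)) := (hFG (i+1)).1
  haveI hp3 : Module.Projective A (M.X (i+1)) := (hFG (i+1)).2
  obtain ⟨m1, π1, hπ1⟩ := Module.Finite.exists_fin' A (M.X (i-1))
  obtain ⟨m2, π2, hπ2⟩ := Module.Finite.exists_fin' A (M.X i)
  obtain ⟨m3, π3, hπ3⟩ := Module.Finite.exists_fin' A (M.X (i+1))
  obtain ⟨s1, hs1⟩ := Module.projective_lifting_property π1 LinearMap.id hπ1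
  obtain ⟨s2, hs2⟩ := Module.projective_lifting_property π2 LinearMap.id hπ2
  obtain ⟨s3, hs3⟩ := Module.projective_lifting_property π3 LinearMap.id hπ3
  let π1h : ModuleCat.of A (Fin m1 → A) ⟶ M.X (i-1) := ModuleCat.ofHom π1
  let π2h : ModuleCat.of A (Fin m2 → A) ⟶ M.X i := ModuleCat.ofHom π2
  let π3h : ModuleCat.of A (Fin m3 → A) ⟶ M.X (i+1) := ModuleCat.ofHom π3
  let s1h : M.X (i-1) ⟶ ModuleCat.of A (Fin m1 → A) := ModuleCat.ofHom s1
  let s2h : M.X i ⟶ ModuleCat.of A (Fin m2 → A) := ModuleCat.ofHom s2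
  let s3h : M.X (i+1) ⟶ ModuleCat.of A (Fin m3 → A) := ModuleCat.ofHom s3
  have hsp1 : s1h ≫ π1h = 𝟙 (M.X (i-1)) := ModuleCat.hom_ext hs1
  have hsp2 : s2h ≫ π2h = 𝟙 (M.X i) := ModuleCat.hom_ext hs2
  have hsp3 : s3h ≫ π3h = 𝟙 (M.X (i+1)) := ModuleCat.hom_ext hs3
  let l1 : ModuleCat.of A (Fin m1 → A) ⟶ ModuleCat.of A (Fin m2 → A) :=
    π1h ≫ M.d (i-1) i ≫ s2h
  let l2 : ModuleCat.of A (Fin m2 → A) ⟶ ModuleCat.of A (Fin m3 → A) :=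
    π2h ≫ M.d i (i+1) ≫ s3h
  let e0 : ModuleCat.of A (Fin m2 → A) ⟶ ModuleCat.of A (Fin m2 → A) := π2h ≫ s2h
  let D1 : Matrix (Fin m2) (Fin m1) A :=
    LinearMap.toMatrix' l1.hom
  let D2 : Matrix (Fin m3) (Fin m2) A :=
    LinearMap.toMatrix' l2.hom
  let Em : Matrix (Fin m2) (Fin m2) A :=
    LinearMap.toMatrix' e0.hom
  let E : Matrix (Fin m2) (Fin m2) A := 1 - Em
  have key : ∀ p : PrimeSpectrum A,
      Module.finrank (kappa A p) ((fiberComplex A p M).homology i)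
        + (D1.map (algebraMap A (kappa A p))).rank
        + (D2.map (algebraMap A (kappa A p))).rank
        + (E.map (algebraMap A (kappa A p))).rank = m2 := by
    intro p
    set ψ := algebraMap A (kappa A p) with hψ
    set F := ModuleCat.extendScalars ψ with hF
    set C := fiberComplex A p M with hC
    haveI hfd2 : FiniteDimensional (kappa A p) (C.X i) := finite_fobj ψ π2h s2h hsp2
    have hhom := finrank_homology_eq C i
    have hr1 : Module.finrank (kappa A p) (LinearMap.range (C.d (i-1) i).hom)
        = (D1.map ψ).rank := by
      have e1 : (F.map l1).hom
          = (F.map s2h).hom ∘ₗ ((F.map (M.d (i-1) i)).hom ∘ₗ (F.map π1h).hom) := by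
        show (F.map (π1h ≫ M.d (i-1) i ≫ s2h)).hom = _
        rw [Functor.map_comp, Functor.map_comp]
        rfl
      have h2 := finrank_range_map_eq ψ m1 m2 l1
      have hd1 : (C.d (i-1) i).hom = (F.map (M.d (i-1) i)).hom := rfl
      rw [hd1, ← h2, e1,
        fr_comp_inj (F.map s2h).hom ((F.map (M.d (i-1) i)).hom ∘ₗ (F.map π1h).hom)
          (fmap_split_surj_inj ψ π2h s2h hsp2).2,
        fr_comp_surj (F.map (M.d (i-1) i)).hom (F.map π1h).hom
          (fmap_split_surj_inj ψ π1h s1h hsp1).1]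
      rfl
    have hr2 : Module.finrank (kappa A p) (LinearMap.range (C.d i (i+1)).hom)
        = (D2.map ψ).rank := by
      have e1 : (F.map l2).hom
          = (F.map s3h).hom ∘ₗ ((F.map (M.d i (i+1))).hom ∘ₗ (F.map π2h).hom) := by
        show (F.map (π2h ≫ M.d i (i+1) ≫ s3h)).hom = _
        rw [Functor.map_comp, Functor.map_comp]
        rfl
      have h2 := finrank_range_map_eq ψ m2 m3 l2
      have hd2 : (C.d i (i+1)).hom = (F.map (M.d i (i+1))).hom := rfl
      rw [hd2, ← h2, e1,
        fr_comp_inj (F.map s3h).hom ((F.map (M.d i (i+1))).hom ∘ₗ (F.map π2h).hom)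
          (fmap_split_surj_inj ψ π3h s3h hsp3).2,
        fr_comp_surj (F.map (M.d i (i+1))).hom (F.map π2h).hom
          (fmap_split_surj_inj ψ π2h s2h hsp2).1]
      rfl
    have he0 : e0 ≫ e0 = e0 := by
      show (π2h ≫ s2h) ≫ (π2h ≫ s2h) = π2h ≫ s2h
      have h9 : s2h ≫ (π2h ≫ s2h) = s2h := by
        rw [← Category.assoc, hsp2, Category.id_comp]
      rw [Category.assoc, h9]
    have hEm : Em * Em = Em := by
      show LinearMap.toMatrix' e0.hom
          * LinearMap.toMatrix' e0.hom = Em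
      rw [← LinearMap.toMatrix'_comp]
      exact congrArg LinearMap.toMatrix' (congrArg ModuleCat.Hom.hom he0)
    set q : (Fin m2 → (kappa A p)) →ₗ[kappa A p] (Fin m2 → (kappa A p)) := (Em.map ψ).mulVecLin with hqdef
    have hq : q ∘ₗ q = q := by
      rw [hqdef, ← Matrix.mulVecLin_mul, ← Matrix.map_mul, hEm]
    have hidem := idem_rank q hq
    have hq1 : Module.finrank (kappa A p) (LinearMap.range q) = Module.finrank (kappa A p) (C.X i) := by
      have h3 := finrank_range_map_eq ψ m2 m2 e0
      have e2 : (F.map e0).hom = (F.map s2h).hom ∘ₗ (F.map π2h).hom := by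
        show (F.map (π2h ≫ s2h)).hom = _
        rw [Functor.map_comp]
        rfl
      have h4 : Module.finrank (kappa A p) (LinearMap.range ((F.map s2h).hom ∘ₗ (F.map π2h).hom))
          = Module.finrank (kappa A p) (LinearMap.range (F.map s2h).hom) :=
        fr_comp_surj (F.map s2h).hom (F.map π2h).hom (fmap_split_surj_inj ψ π2h s2h hsp2).1
      have h5 : Module.finrank (kappa A p) (LinearMap.range (F.map s2h).hom) = Module.finrank (kappa A p) (C.X i) :=
        LinearMap.finrank_range_of_inj (fmap_split_surj_inj ψ π2h s2h hsp2).2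
      have h6 : Module.finrank (kappa A p) (LinearMap.range q) = (Em.map ψ).rank := rfl
      rw [h6, ← h3, e2, h4, h5]
    have hq2 : Module.finrank (kappa A p) (LinearMap.range (LinearMap.id - q)) = (E.map ψ).rank := by
      have hEψ : E.map ψ = 1 - Em.map ψ := by
        show ((1 : Matrix (Fin m2) (Fin m2) A) - Em).map ψ = 1 - Em.map ψ
        ext a b
        simp only [Matrix.map_apply, Matrix.sub_apply, Matrix.one_apply, map_sub]
        congr 1
        split <;> simp
      have h7 : (E.map ψ).mulVecLin = LinearMap.id - q := by
        rw [hEψ, hqdef]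
        apply LinearMap.ext
        intro v
        simp [Matrix.mulVecLin_apply, Matrix.sub_mulVec, Matrix.one_mulVec]
      have h8 : (E.map ψ).rank
          = Module.finrank (kappa A p) (LinearMap.range ((E.map ψ).mulVecLin)) := rfl
      rw [h8, h7]
    have hm2 : Module.finrank (kappa A p) (Fin m2 → kappa A p) = m2 := Module.finrank_fin_fun (kappa A p)
    omega
  have hset : {p : PrimeSpectrum A |
      n ≤ Module.finrank (kappa A p) ((fiberComplex A p M).homology i)}
      = ⋃ (c : {c : Fin (m2+1) × Fin (m2+1) × Fin (m2+1) //
            (c.1 : ℕ) + (c.2.1 : ℕ) + (c.2.2 : ℕ) + n ≤ m2}),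
          (ZSet D1 (c.1.1 : ℕ) ∩ (ZSet D2 (c.1.2.1 : ℕ) ∩ ZSet E (c.1.2.2 : ℕ))) := by
    ext p
    simp only [Set.mem_setOf_eq, Set.mem_iUnion, Set.mem_inter_iff]
    constructor
    · intro hn
      have hkey := key p
      have hb1 : (D1.map (algebraMap A (kappa A p))).rank ≤ m2 := by omega
      have hb2 : (D2.map (algebraMap A (kappa A p))).rank ≤ m2 := by omega
      have hb3 : (E.map (algebraMap A (kappa A p))).rank ≤ m2 := by omega
      refine ⟨⟨(⟨(D1.map (algebraMap A (kappa A p))).rank, by omega⟩,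
        ⟨(D2.map (algebraMap A (kappa A p))).rank, by omega⟩,
        ⟨(E.map (algebraMap A (kappa A p))).rank, by omega⟩), ?_⟩, ?_, ?_, ?_⟩
      · show (D1.map (algebraMap A (kappa A p))).rank
            + (D2.map (algebraMap A (kappa A p))).rank
            + (E.map (algebraMap A (kappa A p))).rank + n ≤ m2
        omega
      · exact (mem_ZSet_iff D1 _ p).2 (le_refl _)
      · exact (mem_ZSet_iff D2 _ p).2 (le_refl _)
      · exact (mem_ZSet_iff E _ p).2 (le_refl _)
    · rintro ⟨⟨c, hc⟩, h1, h2, h3⟩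
      rw [mem_ZSet_iff] at h1 h2 h3
      dsimp only at h1 h2 h3
      have hkey := key p
      omega
  rw [hset]
  exact isClosed_iUnion_of_finite fun c =>
    ((ZSet_closed D1 _).inter ((ZSet_closed D2 _).inter (ZSet_closed E _)))
end
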